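/- Let k be a field and q ∈ k× not a root of unity, with n ≥ 2. Then the center of the skew polynomial ring k_q[x_1,...,x_n] (generated by x_1,...,x_n with relations x_j x_i = q x_i x_j for i < j) is k. -/

import Mathlib

universe u

/-- The defining relations of the skew polynomial ring `k_q[x₁,…,xₙ]`:
`x_j x_i = q x_i x_j` for all `i < j`. -/
inductive SkewRel (k : Type u) [Field k] (q : k) (n : ℕ) :
    FreeAlgebra k (Fin n) → FreeAlgebra k (Fin n) → Prop
  | rel (i j : Fin n) (hij : i < j) :
      SkewRel k q n (FreeAlgebra.ι k j * FreeAlgebra.ι k i)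
        (algebraMap k (FreeAlgebra k (Fin n)) q * (FreeAlgebra.ι k i * FreeAlgebra.ι k j))

/-- The skew polynomial ring `k_q[x₁,…,xₙ]`. -/
def SkewPolynomialRing (k : Type u) [Field k] (q : k) (n : ℕ) : Type u :=
  RingQuot (SkewRel k q n)

noncomputable instance (k : Type u) [Field k] (q : k) (n : ℕ) :
    Ring (SkewPolynomialRing k q n) := inferInstanceAs (Ring (RingQuot (SkewRel k q n)))

noncomputable instance (k : Type u) [Field k] (q : k) (n : ℕ) :
    Algebra k (SkewPolynomialRing k q n) :=
  inferInstanceAs (Algebra k (RingQuot (SkewRel k q n)))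

namespace SkewAux

variable (k : Type u) [Field k] (q : k) (n : ℕ)

/-- weight below `i` -/
def wt {n : ℕ} (i : Fin n) (a : Fin n →₀ ℕ) : ℕ := ∑ m ∈ Finset.Iio i, a m

lemma wt_add {n : ℕ} (i : Fin n) (a b : Fin n →₀ ℕ) : wt i (a + b) = wt i a + wt i b := by
  simp [wt, Finset.sum_add_distrib]

lemma wt_single {n : ℕ} (i j : Fin n) (m : ℕ) :
    wt i (Finsupp.single j m) = if j < i then m else 0 := by
  classical
  simp only [wt, Finsupp.single_apply]
  rw [Finset.sum_ite_eq (Finset.Iio i) j (fun _ => m)]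
  simp [Finset.mem_Iio]

/-- basis vector -/
noncomputable def e {k : Type u} [Field k] {n : ℕ} (a : Fin n →₀ ℕ) : (Fin n →₀ ℕ) →₀ k :=
  Finsupp.single a 1

/-- the operator representing `x_i` -/
noncomputable def T (i : Fin n) : ((Fin n →₀ ℕ) →₀ k) →ₗ[k] ((Fin n →₀ ℕ) →₀ k) :=
  Finsupp.lsum k fun a => q ^ wt i a • Finsupp.lsingle (a + Finsupp.single i 1)

lemma T_apply_e (i : Fin n) (a : Fin n →₀ ℕ) :
    T k q n i (e a) = q ^ wt i a • e (a + Finsupp.single i 1) := by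
  simp [T, e, Finsupp.smul_single]

end SkewAux

namespace SkewAux
variable (k : Type u) [Field k] (q : k) (n : ℕ)

lemma T_comm {i j : Fin n} (hij : i < j) :
    T k q n j * T k q n i =
      algebraMap k (Module.End k ((Fin n →₀ ℕ) →₀ k)) q * (T k q n i * T k q n j) := by
  apply Finsupp.lhom_ext (fun a b => ?_)
  have h1 : (Finsupp.single a b : (Fin n →₀ ℕ) →₀ k) = b • e a := by
    simp [e, Finsupp.smul_single]
  simp only [h1, map_smul, Module.algebraMap_end_eq_smul_id, Module.End.mul_apply,
    LinearMap.smul_apply, LinearMap.id_apply]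
  congr 1
  have hidx : (a + Finsupp.single i 1) + Finsupp.single j 1
      = (a + Finsupp.single j 1) + Finsupp.single i 1 := by
    rw [add_assoc, add_assoc, add_comm (Finsupp.single i 1)]
  rw [T_apply_e, map_smul, T_apply_e, T_apply_e, map_smul, T_apply_e, hidx]
  rw [wt_add, wt_add, wt_single, wt_single, if_pos hij, if_neg (lt_asymm hij)]
  simp only [smul_smul]
  congr 1
  simp only [pow_add, pow_succ, pow_zero]
  ring

/-- the representation of the free algebra -/
noncomputable def ρ : FreeAlgebra k (Fin n) →ₐ[k] Module.End k ((Fin n →₀ ℕ) →₀ k) :=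
  FreeAlgebra.lift k (T k q n)

lemma ρ_rel : ∀ ⦃x y : FreeAlgebra k (Fin n)⦄, SkewRel k q n x y → ρ k q n x = ρ k q n y := by
  rintro x y ⟨i, j, hij⟩
  simp only [map_mul, ρ, FreeAlgebra.lift_ι_apply, AlgHom.commutes]
  exact T_comm k q n hij

/-- the representation of the skew polynomial ring -/
noncomputable def ρ' : SkewPolynomialRing k q n →ₐ[k] Module.End k ((Fin n →₀ ℕ) →₀ k) :=
  RingQuot.liftAlgHom k ⟨ρ k q n, ρ_rel k q n⟩

/-- the generators -/
noncomputable def X (i : Fin n) : SkewPolynomialRing k q n :=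
  RingQuot.mkAlgHom k (SkewRel k q n) (FreeAlgebra.ι k i)

lemma ρ'_X (i : Fin n) : ρ' k q n (X k q n i) = T k q n i := by
  have := RingQuot.liftAlgHom_mkAlgHom_apply k (s := SkewRel k q n) (ρ k q n) (ρ_rel k q n)
    (FreeAlgebra.ι k i)
  rw [X, ρ']
  exact this.trans (by simp [ρ])

end SkewAux

namespace SkewAux
variable (k : Type u) [Field k] (q : k) (n : ℕ)

lemma X_comm {i j : Fin n} (hij : i < j) :
    X k q n j * X k q n i = q • (X k q n i * X k q n j) := by
  have h := RingQuot.mkAlgHom_rel k (SkewRel.rel (k := k) (q := q) i j hij)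
  rw [map_mul, map_mul, map_mul] at h
  rw [AlgHom.commutes, ← Algebra.smul_def] at h
  exact h

lemma X_pow_comm {i j : Fin n} (hij : i < j) (m : ℕ) :
    X k q n j ^ m * X k q n i = q ^ m • (X k q n i * X k q n j ^ m) := by
  induction m with
  | zero => simp
  | succ m ih =>
    rw [pow_succ, mul_assoc, X_comm k q n hij, mul_smul_comm, ← mul_assoc, ih,
      smul_mul_assoc, smul_smul, ← pow_succ', mul_assoc, ← pow_succ]

/-- ordered monomial -/
noncomputable def M (a : Fin n →₀ ℕ) : SkewPolynomialRing k q n :=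
  ((List.finRange n).map fun i => X k q n i ^ a i).prod

lemma M_zero : M k q n 0 = 1 := by
  simp only [M, Finsupp.coe_zero, Pi.zero_apply, pow_zero]
  exact List.prod_eq_one (by simp)

/-- moving a variable past a product of higher variables -/
lemma list_mul_X (j : Fin n) (a : Fin n →₀ ℕ) :
    ∀ l : List (Fin n), (∀ i ∈ l, j < i) →
      ∃ c : ℕ, ((l.map fun i => X k q n i ^ a i).prod) * X k q n j
        = q ^ c • (X k q n j * (l.map fun i => X k q n i ^ a i).prod) := by
  intro l
  induction l with
  | nil => intro _; exact ⟨0, by simp⟩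
  | cons i t ih =>
    intro h
    obtain ⟨c, hc⟩ := ih (fun x hx => h x (List.mem_cons_of_mem _ hx))
    refine ⟨c + a i, ?_⟩
    rw [List.map_cons, List.prod_cons, mul_assoc, hc, mul_smul_comm,
      ← mul_assoc, X_pow_comm k q n (h i List.mem_cons_self) (a i),
      smul_mul_assoc, smul_smul, ← pow_add, mul_assoc]

lemma M_mul_X (a : Fin n →₀ ℕ) (j : Fin n) :
    ∃ c : ℕ, M k q n a * X k q n j = q ^ c • M k q n (a + Finsupp.single j 1) := by
  classical
  obtain ⟨l₁, l₂, hsplit⟩ := List.append_of_mem (List.mem_finRange j (n := n))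
  have hpw := List.pairwise_lt_finRange n
  rw [hsplit, List.pairwise_append] at hpw
  obtain ⟨hp₁, hp₂, hcross⟩ := hpw
  rw [List.pairwise_cons] at hp₂
  have hl₁ : ∀ x ∈ l₁, x < j := fun x hx => hcross x hx j List.mem_cons_self
  have hl₂ : ∀ x ∈ l₂, j < x := hp₂.1
  set a' := a + Finsupp.single j 1 with ha'
  have haa' : ∀ i : Fin n, i ≠ j → a' i = a i := by
    intro i hi
    simp [ha', Finsupp.single_apply, Ne.symm hi]
  have hmap₁ : (l₁.map fun i => X k q n i ^ a' i) = l₁.map fun i => X k q n i ^ a i := by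
    apply List.map_congr_left
    intro i hi; rw [haa' i (ne_of_lt (hl₁ i hi))]
  have hmap₂ : (l₂.map fun i => X k q n i ^ a' i) = l₂.map fun i => X k q n i ^ a i := by
    apply List.map_congr_left
    intro i hi; rw [haa' i (ne_of_gt (hl₂ i hi))]
  have ha'j : a' j = a j + 1 := by simp [ha']
  obtain ⟨c, hc⟩ := list_mul_X k q n j a l₂ hl₂
  refine ⟨c, ?_⟩
  rw [M, M, hsplit, List.map_append, List.map_append, List.prod_append, List.prod_append,
    List.map_cons, List.map_cons, List.prod_cons, List.prod_cons, hmap₁, hmap₂, ha'j]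
  rw [mul_assoc, mul_assoc, hc, mul_smul_comm, mul_smul_comm]
  congr 2
  rw [← mul_assoc, ← pow_succ]

end SkewAux

namespace SkewAux
variable (k : Type u) [Field k] (q : k) (n : ℕ)

/-- the linear section sending monomial exponents to monomials -/
noncomputable def σ : ((Fin n →₀ ℕ) →₀ k) →ₗ[k] SkewPolynomialRing k q n :=
  Finsupp.lsum k fun a => LinearMap.toSpanSingleton k _ (M k q n a)

lemma σ_e (a : Fin n →₀ ℕ) : σ k q n (e a) = M k q n a := by
  simp [σ, e, LinearMap.toSpanSingleton_apply]

lemma σ_apply (v : (Fin n →₀ ℕ) →₀ k) : σ k q n v = v.sum fun a c => c • M k q n a := by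
  rfl

lemma adjoin_X : Algebra.adjoin k (Set.range (X k q n)) = ⊤ := by
  have h1 : Algebra.adjoin k (Set.range (FreeAlgebra.ι k (X := Fin n))) = ⊤ :=
    FreeAlgebra.adjoin_range_ι k (Fin n)
  have h2 : Function.Surjective (RingQuot.mkAlgHom k (SkewRel k q n)) :=
    RingQuot.mkAlgHom_surjective k _
  have h3 := congrArg (Subalgebra.map (RingQuot.mkAlgHom k (SkewRel k q n))) h1
  rw [AlgHom.map_adjoin] at h3
  rw [Algebra.map_top] at h3
  rw [(AlgHom.range_eq_top _).mpr h2] at h3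
  rw [← Set.range_comp] at h3
  exact h3

lemma σ_surjective : Function.Surjective (σ k q n) := by
  classical
  set p := LinearMap.range (σ k q n) with hp
  have hMp : ∀ a, M k q n a ∈ p := fun a => ⟨e a, σ_e k q n a⟩
  -- the subalgebra of elements whose left multiples stay in p
  let Ts : Subalgebra k (SkewPolynomialRing k q n) :=
  { carrier := {r | ∀ s ∈ p, s * r ∈ p}
    mul_mem' := fun hx hy s hs => by rw [← mul_assoc]; exact hy _ (hx _ hs)
    add_mem' := fun hx hy s hs => by rw [mul_add]; exact p.add_mem (hx _ hs) (hy _ hs)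
    algebraMap_mem' := fun c s hs => by
      rw [Algebra.algebraMap_eq_smul_one, mul_smul_comm, mul_one]
      exact p.smul_mem c hs }
  have hX : ∀ i, X k q n i ∈ Ts := by
    intro j s hs
    obtain ⟨w, rfl⟩ := hs
    rw [σ_apply, Finsupp.sum, Finset.sum_mul]
    apply p.sum_mem
    intro a _
    rw [smul_mul_assoc]
    apply p.smul_mem
    obtain ⟨c, hc⟩ := M_mul_X k q n a j
    rw [hc]
    exact p.smul_mem _ (hMp _)
  have hTop : Ts = ⊤ := by
    rw [← top_le_iff, ← adjoin_X k q n]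
    exact Algebra.adjoin_le (fun x hx => by obtain ⟨i, rfl⟩ := hx; exact hX i)
  intro z
  have h1 : (1 : SkewPolynomialRing k q n) ∈ p := by
    rw [← M_zero k q n]; exact hMp 0
  have hz : z ∈ Ts := hTop ▸ Algebra.mem_top
  have := hz 1 h1
  rw [one_mul] at this
  exact this

end SkewAux

namespace SkewAux
variable (k : Type u) [Field k] (q : k) (n : ℕ)

lemma T_pow_apply_e (i : Fin n) (m : ℕ) (a : Fin n →₀ ℕ) :
    (T k q n i ^ m) (e a) = q ^ (m * wt i a) • e (a + Finsupp.single i m) := by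
  induction m with
  | zero => simp [e]
  | succ m ih =>
    rw [pow_succ', Module.End.mul_apply, ih, map_smul, T_apply_e, smul_smul, ← pow_add]
    rw [wt_add, wt_single, if_neg (lt_irrefl i), add_zero]
    rw [add_assoc, ← Finsupp.single_add]
    congr 2
    ring

lemma wt_list_sum_zero (a : Fin n →₀ ℕ) (i : Fin n) :
    ∀ t : List (Fin n), (∀ x ∈ t, i < x) →
      wt i ((t.map fun i' => Finsupp.single i' (a i')).sum) = 0 := by
  intro t
  induction t with
  | nil => intro _; simp [wt]
  | cons x t' ih' =>
    intro h
    rw [List.map_cons, List.sum_cons, wt_add, wt_single,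
      if_neg (lt_asymm (h x List.mem_cons_self)),
      ih' (fun x' hx' => h x' (List.mem_cons_of_mem _ hx'))]

lemma list_T_apply_e (a : Fin n →₀ ℕ) :
    ∀ l : List (Fin n), l.Pairwise (· < ·) → ∀ b : Fin n →₀ ℕ,
      ((l.map fun i => T k q n i ^ a i).prod) (e b)
        = q ^ ((l.map fun i => a i * wt i b).sum)
            • e (b + (l.map fun i => Finsupp.single i (a i)).sum) := by
  intro l
  induction l with
  | nil => intro _ b; simp
  | cons i t ih =>
    intro hpw b
    rw [List.pairwise_cons] at hpw
    have hwt0 : wt i ((t.map fun i' => Finsupp.single i' (a i')).sum) = 0 :=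
      wt_list_sum_zero n a i t hpw.1
    rw [List.map_cons, List.prod_cons, Module.End.mul_apply,
      ih hpw.2 b, map_smul, T_pow_apply_e, smul_smul, ← pow_add,
      List.map_cons, List.sum_cons, List.map_cons, List.sum_cons]
    rw [wt_add, hwt0, add_zero]
    have : b + (t.map fun i' => Finsupp.single i' (a i')).sum + Finsupp.single i (a i)
        = b + (Finsupp.single i (a i) + (t.map fun i' => Finsupp.single i' (a i')).sum) := by
      rw [add_assoc, add_comm (Finsupp.single i (a i))]
    rw [this]
    congr 2
    ring

end SkewAux

namespace SkewAux
variable (k : Type u) [Field k] (q : k) (n : ℕ)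

lemma ρ'_M_apply_e (a b : Fin n →₀ ℕ) :
    ρ' k q n (M k q n a) (e b) = q ^ (∑ i : Fin n, a i * wt i b) • e (b + a) := by
  have h1 : ρ' k q n (M k q n a) = ((List.finRange n).map fun i => T k q n i ^ a i).prod := by
    rw [M, map_list_prod, List.map_map]
    congr 1
    apply List.map_congr_left
    intro i _
    simp [Function.comp, map_pow, ρ'_X]
  rw [h1, list_T_apply_e k q n a (List.finRange n) (List.pairwise_lt_finRange n) b]
  rw [← Fin.sum_univ_def, ← Fin.sum_univ_def, Finsupp.univ_sum_single]

/-- evaluation at the vacuum vector -/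
noncomputable def ev : SkewPolynomialRing k q n →ₗ[k] ((Fin n →₀ ℕ) →₀ k) :=
  (LinearMap.applyₗ (e 0)).comp (ρ' k q n).toLinearMap

lemma ev_apply (z : SkewPolynomialRing k q n) : ev k q n z = ρ' k q n z (e 0) := rfl

lemma ev_M (a : Fin n →₀ ℕ) : ev k q n (M k q n a) = e a := by
  rw [ev_apply, ρ'_M_apply_e]
  have : ∀ i : Fin n, a i * wt i 0 = 0 := by
    intro i; simp [wt]
  simp only [this, Finset.sum_const_zero, pow_zero, one_smul, zero_add]

lemma σ_ev (z : SkewPolynomialRing k q n) : σ k q n (ev k q n z) = z := by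
  obtain ⟨w, rfl⟩ := σ_surjective k q n z
  congr 1
  induction w using Finsupp.induction_linear with
  | zero => simp
  | add f g hf hg => rw [map_add, map_add, hf, hg]
  | single a c =>
    have : (Finsupp.single a c : (Fin n →₀ ℕ) →₀ k) = c • e a := by
      simp [e, Finsupp.smul_single]
    rw [this, map_smul, map_smul, σ_e, ev_M]

end SkewAux

namespace SkewAux
variable (k : Type u) [Field k] (q : k) (n : ℕ)

lemma pow_inj_aux {k : Type u} [Field k] {q : k} (hq0 : q ≠ 0) (hq : ∀ m : ℕ, 1 ≤ m → q ^ m ≠ 1)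
    {s t : ℕ} (hle : s ≤ t) (h : q ^ s = q ^ t) : s = t := by
  by_contra hne
  have h1 : q ^ t = q ^ s * q ^ (t - s) := by rw [← pow_add]; congr 1; omega
  have h2 : q ^ s * 1 = q ^ s * q ^ (t - s) := by
    conv_lhs => rw [mul_one, h, h1]
  have h3 := (mul_left_cancel₀ (pow_ne_zero s hq0) h2).symm
  exact hq (t - s) (by omega) h3

lemma pow_inj {k : Type u} [Field k] {q : k} (hq0 : q ≠ 0) (hq : ∀ m : ℕ, 1 ≤ m → q ^ m ≠ 1)
    {s t : ℕ} (h : q ^ s = q ^ t) : s = t := by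
  rcases le_total s t with hle | hle
  · exact pow_inj_aux hq0 hq hle h
  · exact (pow_inj_aux hq0 hq hle h.symm).symm

lemma eval_sum_single (v : (Fin n →₀ ℕ) →₀ k) (g : (Fin n →₀ ℕ) → k)
    (h : (Fin n →₀ ℕ) → (Fin n →₀ ℕ)) (hinj : Function.Injective h) (a₀ : Fin n →₀ ℕ) :
    (v.sum fun a c => Finsupp.single (h a) (g a * c)) (h a₀) = g a₀ * v a₀ := by
  classical
  rw [Finsupp.sum_apply, Finsupp.sum, Finset.sum_eq_single a₀]
  · rw [Finsupp.single_apply, if_pos rfl]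
  · intro a _ hne
    rw [Finsupp.single_apply, if_neg (fun hh => hne (hinj hh))]
  · intro ha
    rw [Finsupp.notMem_support_iff.mp ha, mul_zero, Finsupp.single_zero, Finsupp.coe_zero,
      Pi.zero_apply]

end SkewAux

open SkewAux

/-- If `q ∈ k×` is not a root of unity and `n ≥ 2`, then the center of the skew
polynomial ring `k_q[x₁,…,xₙ]` is `k`. -/
theorem center_skewPolynomialRing_eq_bot (k : Type u) [Field k] (q : k) (n : ℕ)
    (hq0 : q ≠ 0) (hq : ∀ m : ℕ, 1 ≤ m → q ^ m ≠ 1) (hn : 2 ≤ n) :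
    Subalgebra.center k (SkewPolynomialRing k q n) = ⊥ := by
  classical
  refine le_antisymm ?_ bot_le
  intro z hz
  have hcz := Subalgebra.mem_center_iff.mp hz
  set v := ev k q n z with hvdef
  have hzv : σ k q n v = z := σ_ev k q n z
  -- the key combinatorial identity for exponents in the support
  have key : ∀ j : Fin n, ∀ a₀ ∈ v.support,
      wt j a₀ = ∑ i : Fin n, a₀ i * wt i (Finsupp.single j 1) := by
    intro j a₀ ha₀
    have hinj : Function.Injective (fun a : Fin n →₀ ℕ => a + Finsupp.single j 1) := by
      intro a b hab
      ext i
      have := DFunLike.congr_fun hab i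
      simp only [Finsupp.add_apply] at this
      omega
    have hXz : X k q n j * z = z * X k q n j := hcz _
    have hthis := congrArg (fun r => ρ' k q n r (e (0 : Fin n →₀ ℕ))) hXz
    simp only [map_mul, Module.End.mul_apply, ρ'_X] at hthis
    have h0 : T k q n j (e (0 : Fin n →₀ ℕ)) = e (Finsupp.single j 1) := by
      rw [T_apply_e]
      have hwt0 : wt j (0 : Fin n →₀ ℕ) = 0 := by simp [wt]
      rw [hwt0, pow_zero, one_smul, zero_add]
    rw [h0] at hthis
    -- hthis : T j (ρ' z (e 0)) = ρ' z (e δⱼ)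
    have hT : T k q n j v = v.sum fun a c =>
        Finsupp.single (a + Finsupp.single j 1) (q ^ wt j a * c) := by
      rw [T, Finsupp.lsum_apply]
      refine Finsupp.sum_congr fun a _ => ?_
      rw [LinearMap.smul_apply, Finsupp.lsingle_apply, Finsupp.smul_single']
    have hρ : ρ' k q n z (e (Finsupp.single j 1)) = v.sum fun a c =>
        Finsupp.single (a + Finsupp.single j 1)
          (q ^ (∑ i : Fin n, a i * wt i (Finsupp.single j 1)) * c) := by
      have hFapp : ∀ r : SkewPolynomialRing k q n,
          ((LinearMap.applyₗ (e (Finsupp.single j 1))).comp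
            (ρ' k q n).toLinearMap) r = ρ' k q n r (e (Finsupp.single j 1)) := fun r => rfl
      rw [← hzv, σ_apply, ← hFapp, map_finsuppSum]
      refine Finsupp.sum_congr fun a _ => ?_
      rw [map_smul, hFapp, ρ'_M_apply_e, e, smul_smul, Finsupp.smul_single', mul_one,
        mul_comm _ (q ^ _), add_comm (Finsupp.single j 1) a]
    have hev : ρ' k q n z (e (0 : Fin n →₀ ℕ)) = v := rfl
    rw [hev, hT, hρ] at hthis
    have e1 := congrArg (fun w : (Fin n →₀ ℕ) →₀ k => w (a₀ + Finsupp.single j 1)) hthis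
    rw [eval_sum_single k n v (fun a => q ^ wt j a) _ hinj a₀,
      eval_sum_single k n v (fun a => q ^ (∑ i : Fin n, a i * wt i (Finsupp.single j 1))) _
        hinj a₀] at e1
    have hv0 : v a₀ ≠ 0 := Finsupp.mem_support_iff.mp ha₀
    exact pow_inj hq0 hq (mul_right_cancel₀ hv0 e1)
  -- the support of v is {0}
  have hsupp : ∀ a₀ ∈ v.support, a₀ = 0 := by
    intro a₀ ha₀
    set j₀ : Fin n := ⟨0, by omega⟩ with hj₀
    set j₁ : Fin n := ⟨n - 1, by omega⟩ with hj₁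
    have hj₀v : (j₀ : ℕ) = 0 := rfl
    have hj₁v : (j₁ : ℕ) = n - 1 := rfl
    have h0 := key j₀ a₀ ha₀
    have h1 := key j₁ a₀ ha₀
    have hw0 : wt j₀ a₀ = 0 := by
      refine Finset.sum_eq_zero fun m hm => ?_
      exact absurd (Finset.mem_Iio.mp hm) (by rw [Fin.lt_def]; omega)
    -- every coordinate away from j₀ vanishes
    have hne0 : ∀ i : Fin n, i ≠ j₀ → a₀ i = 0 := by
      intro i hi
      have := (Finset.sum_eq_zero_iff.mp (hw0 ▸ h0).symm) i (Finset.mem_univ i)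
      rw [wt_single] at this
      have hlt : j₀ < i := by
        rw [Fin.lt_def]
        have : i.val ≠ 0 := fun hc => hi (Fin.ext (by omega))
        omega
      rw [if_pos hlt, mul_one] at this
      exact this
    -- and the coordinate at j₀ vanishes too, using the top index
    have h1r : wt j₁ a₀ = 0 := by
      rw [h1]
      refine Finset.sum_eq_zero fun i _ => ?_
      rw [wt_single, if_neg, mul_zero]
      rw [Fin.lt_def]
      have := i.isLt
      omega
    have hj0mem : j₀ ∈ Finset.Iio j₁ := by
      rw [Finset.mem_Iio, Fin.lt_def]
      omega
    have ha0j₀ : a₀ j₀ = 0 := Finset.sum_eq_zero_iff.mp h1r j₀ hj0mem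
    ext i
    rcases eq_or_ne i j₀ with rfl | hi
    · exact ha0j₀
    · exact hne0 i hi
  -- conclude: v is concentrated at 0, so z is a scalar
  set c := v 0 with hc
  have hv1 : v = Finsupp.single 0 c := by
    ext a
    rcases eq_or_ne a 0 with rfl | ha
    · rw [← hc, Finsupp.single_eq_same]
    · rw [Finsupp.single_eq_of_ne ha]
      by_contra h'
      exact ha (hsupp a (Finsupp.mem_support_iff.mpr h'))
  rw [Algebra.mem_bot]
  refine ⟨c, ?_⟩
  have hsingle : (Finsupp.single (0 : Fin n →₀ ℕ) c : (Fin n →₀ ℕ) →₀ k)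
      = c • e (0 : Fin n →₀ ℕ) := by
    rw [e, Finsupp.smul_single', mul_one]
  rw [← hzv, hv1, hsingle, map_smul, σ_e, M_zero, Algebra.algebraMap_eq_smul_one]
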